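/- Let u be an eventually periodic fixed point of a primitive marked morphism φ over a finite alphabet A. If u is palindromic, then A = {0,1} is a binary alphabet and u equals (01)^ω or (10)^ω (the periodic words 010101⋯ and 101010⋯). -/

import Mathlib

namespace ZDC

variable {A : Type*}

/-- The finite word `u_i u_{i+1} ⋯ u_{i+n-1}` occurring at position `i` in `u`. -/
def factorAt (u : ℕ → A) (i n : ℕ) : List A := (List.range n).map (fun j => u (i + j))

/-- `w` occurs at index `i` in the infinite word `u`. -/
def OccursAt (u : ℕ → A) (w : List A) (i : ℕ) : Prop := w = factorAt u i w.length

/-- The language of the infinite word `u`: the set of its factors. -/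
def Lang (u : ℕ → A) : Set (List A) := {w | ∃ i, OccursAt u w i}

/-- The language of `u` is closed under reversal. -/
def ClosedUnderReversal (u : ℕ → A) : Prop := ∀ w ∈ Lang u, w.reverse ∈ Lang u

/-- Number of distinct palindromic factors of a finite word (the empty word counts). -/
noncomputable def palCount (w : List A) : ℕ := {v : List A | v <:+: w ∧ v.reverse = v}.ncard

/-- Palindromic defect of a finite word: `|w| + 1 - p(w)`. -/
noncomputable def wordDefect (w : List A) : ℕ := w.length + 1 - palCount w

/-- Palindromic defect of an infinite word: sup of defects of its factors, in `ℕ∞`. -/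
noncomputable def Defect (u : ℕ → A) : ℕ∞ := ⨆ w ∈ Lang u, (wordDefect w : ℕ∞)

/-- `u` contains infinitely many palindromic factors. -/
def Palindromic (u : ℕ → A) : Prop := ∀ N, ∃ w ∈ Lang u, N ≤ w.length ∧ w.reverse = w

/-- `u` is (purely) periodic: `u = zzz⋯` for a nonempty `z`. -/
def Periodic (u : ℕ → A) : Prop := ∃ p, 0 < p ∧ ∀ n, u (n + p) = u n

/-- `u` is eventually periodic: `u = v zzz⋯`. -/
def EventuallyPeriodic (u : ℕ → A) : Prop := ∃ p, 0 < p ∧ ∃ N, ∀ n ≥ N, u (n + p) = u n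

/-- `r` is a complete return word to `w` in `u`: it stretches from one occurrence of `w`
to the next one (inclusively). -/
def IsCompleteReturn (u : ℕ → A) (w r : List A) : Prop :=
  ∃ i j, i < j ∧ OccursAt u w i ∧ OccursAt u w j ∧
    (∀ k, i < k → k < j → ¬ OccursAt u w k) ∧
    r = factorAt u i (j + w.length - i)

/-- `c` is a complete mirror return to `w` in `u`. -/
def IsCompleteMirrorReturn (u : ℕ → A) (w c : List A) : Prop :=
  c ∈ Lang u ∧
  ¬ w <:+: (c.drop 1).dropLast ∧ ¬ w.reverse <:+: (c.drop 1).dropLast ∧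
  ((w <+: c ∧ w.reverse <:+ c) ∨ (w.reverse <+: c ∧ w <:+ c))

/-- Occurrences of `w` and its reversal alternate in `u`. -/
def Alternate (u : ℕ → A) (w : List A) : Prop :=
  (∀ i j, i < j → OccursAt u w i → OccursAt u w j →
    (∀ k, i < k → k < j → ¬ OccursAt u w k) →
    ∃ k, i ≤ k ∧ k ≤ j ∧ OccursAt u w.reverse k) ∧
  (∀ i j, i < j → OccursAt u w.reverse i → OccursAt u w.reverse j →
    (∀ k, i < k → k < j → ¬ OccursAt u w.reverse k) →
    ∃ k, i ≤ k ∧ k ≤ j ∧ OccursAt u w k)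

/-- Left extensions `E⁻(w)`. -/
def Eminus (u : ℕ → A) (w : List A) : Set A := {a | a :: w ∈ Lang u}

/-- Right extensions `E⁺(w)`. -/
def Eplus (u : ℕ → A) (w : List A) : Set A := {b | w ++ [b] ∈ Lang u}

/-- Bilateral extensions `E(w)`. -/
def Eboth (u : ℕ → A) (w : List A) : Set (A × A) := {p | p.1 :: (w ++ [p.2]) ∈ Lang u}

/-- Symmetric bilateral extensions `E⁼(w)`. -/
def Esym (u : ℕ → A) (w : List A) : Set A := {a | a :: (w ++ [a]) ∈ Lang u}

/-- Bilateral multiplicity `m(w) = #E(w) − #E⁺(w) − #E⁻(w) + 1`. -/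
noncomputable def mult (u : ℕ → A) (w : List A) : ℤ :=
  ((Eboth u w).ncard : ℤ) - (Eplus u w).ncard - (Eminus u w).ncard + 1

/-- `w` is a bispecial factor of `u`. -/
def Bispecial (u : ℕ → A) (w : List A) : Prop :=
  2 ≤ (Eminus u w).ncard ∧ 2 ≤ (Eplus u w).ncard

/-- The bipartite extension graph `Γ(w)` with vertex set `E⁻(w) ⊔ E⁺(w)`. -/
def GammaGraph (u : ℕ → A) (w : List A) : SimpleGraph (↥(Eminus u w) ⊕ ↥(Eplus u w)) :=
  SimpleGraph.fromRel (fun x y =>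
    ∃ (a : ↥(Eminus u w)) (b : ↥(Eplus u w)),
      x = Sum.inl a ∧ y = Sum.inr b ∧ ((a : A), (b : A)) ∈ Eboth u w)

/-- The graph `Θ(w)` on the vertex set `E⁻(w)` for a palindrome `w`. -/
def ThetaGraph (u : ℕ → A) (w : List A) : SimpleGraph (↥(Eminus u w)) :=
  SimpleGraph.fromRel (fun a b => ((a : A), (b : A)) ∈ Eboth u w)

/-- Factor complexity `C(n)`. -/
noncomputable def complexity (u : ℕ → A) (n : ℕ) : ℕ :=
  {w ∈ Lang u | w.length = n}.ncard

/-- Palindromic complexity `P(n)`. -/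
noncomputable def palComplexity (u : ℕ → A) (n : ℕ) : ℕ :=
  {w ∈ Lang u | w.length = n ∧ w.reverse = w}.ncard

/-- Extension of a morphism (given by its letter images) to finite words. -/
def Apply (φ : A → List A) (x : List A) : List A := x.flatMap φ

/-- A morphism is primitive if some power maps each letter to a word containing all letters. -/
def Primitive (φ : A → List A) : Prop :=
  ∃ k, 1 ≤ k ∧ ∀ a b : A, b ∈ (Apply φ)^[k] [a]

/-- `u` is a fixed point of `φ`: the image of every prefix of `u` is again a prefix of `u`. -/
def IsFixedPoint (φ : A → List A) (u : ℕ → A) : Prop :=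
  ∀ n, Apply φ (factorAt u 0 n) = factorAt u 0 (Apply φ (factorAt u 0 n)).length

/-- `ψ ▷ φ`: `ψ` is a left conjugate of `φ` with conjugate word `w`,
i.e. `φ(a)w = wψ(a)` for every letter `a`. -/
def LeftConj (ψ φ : A → List A) (w : List A) : Prop :=
  ∀ a, φ a ++ w = w ++ ψ a

/-- A morphism is cyclic if all images of letters are powers of a common word. -/
def Cyclic (φ : A → List A) : Prop :=
  ∃ w : List A, ∀ a, ∃ k : ℕ, φ a = (List.replicate k w).flatten

/-- First letter (as an `Option`) of the image of a letter. -/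
def Fst (φ : A → List A) : A → Option A := fun a => (φ a).head?

/-- Last letter (as an `Option`) of the image of a letter. -/
def Lst (φ : A → List A) : A → Option A := fun a => (φ a).getLast?

/-- `φL` is the leftmost conjugate of `φ`: a left conjugate whose first-letter map
is not constant. -/
def IsLeftmostConj (φL φ : A → List A) : Prop :=
  (∃ w, LeftConj φL φ w) ∧ ¬ (∀ a b, Fst φL a = Fst φL b)

/-- `φR` is the rightmost conjugate of `φ`: a right conjugate whose last-letter map
is not constant. -/
def IsRightmostConj (φR φ : A → List A) : Prop :=
  (∃ w, LeftConj φ φR w) ∧ ¬ (∀ a b, Lst φR a = Lst φR b)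

/-- A marked morphism: acyclic, and the first-letter map of its leftmost conjugate and
the last-letter map of its rightmost conjugate are injective. -/
def Marked (φ : A → List A) : Prop :=
  ¬ Cyclic φ ∧
  (∃ φL, IsLeftmostConj φL φ ∧ Function.Injective (Fst φL)) ∧
  (∃ φR, IsRightmostConj φR φ ∧ Function.Injective (Lst φR))

end ZDC

namespace ZDC19
open ZDC

variable {A : Type*}

/-! ### factorAt basics -/

lemma length_factorAt (u : ℕ → A) (i n : ℕ) : (factorAt u i n).length = n := by
  simp [factorAt]

lemma getElem_factorAt (u : ℕ → A) (i n j : ℕ) (h : j < (factorAt u i n).length) :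
    (factorAt u i n)[j] = u (i + j) := by
  simp [factorAt]

lemma factorAt_split (u : ℕ → A) (m M : ℕ) (h : m ≤ M) :
    factorAt u 0 M = factorAt u 0 m ++ factorAt u m (M - m) := by
  apply List.ext_getElem
  · simp [length_factorAt, List.length_append]; omega
  · intro i h1 h2
    rw [getElem_factorAt]
    rcases lt_or_ge i m with hi | hi
    · rw [List.getElem_append_left (by simpa [length_factorAt] using hi),
        getElem_factorAt]
    · rw [List.getElem_append_right (by simpa [length_factorAt] using hi),
        getElem_factorAt]
      congr 1
      simp [length_factorAt]
      omega

lemma factorAt_cons (u : ℕ → A) (m d : ℕ) :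
    factorAt u m (d + 1) = u m :: factorAt u (m + 1) d := by
  apply List.ext_getElem
  · simp [length_factorAt]
  · intro i h1 h2
    rw [getElem_factorAt]
    rcases Nat.eq_zero_or_pos i with rfl | hi
    · simp
    · obtain ⟨i', rfl⟩ : ∃ i', i = i' + 1 := ⟨i - 1, by omega⟩
      rw [List.getElem_cons_succ, getElem_factorAt]
      congr 1; omega

lemma factorAt_succ (u : ℕ → A) (m : ℕ) :
    factorAt u 0 (m + 1) = factorAt u 0 m ++ [u m] := by
  rw [factorAt_split u m (m+1) (by omega)]
  congr 1
  simp [factorAt, List.range_succ]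

lemma factorAt_one (u : ℕ → A) (m : ℕ) : factorAt u m 1 = [u m] := by
  simp [factorAt, List.range_succ]

/-! ### Apply basics -/

lemma apply_nil (φ : A → List A) : Apply φ [] = [] := rfl

lemma apply_cons (φ : A → List A) (a : A) (x : List A) :
    Apply φ (a :: x) = φ a ++ Apply φ x := List.flatMap_cons ..

lemma apply_append (φ : A → List A) (x y : List A) :
    Apply φ (x ++ y) = Apply φ x ++ Apply φ y := List.flatMap_append ..

lemma apply_singleton (φ : A → List A) (a : A) : Apply φ [a] = φ a := by
  simp [Apply]

lemma apply_apply (φ ψ : A → List A) (x : List A) :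
    Apply φ (Apply ψ x) = Apply (fun a => Apply φ (ψ a)) x := by
  induction x with
  | nil => simp [apply_nil]
  | cons a x ih => simp [apply_cons, apply_append, ih]

lemma length_apply_of_ne (φ ψ : A → List A) (h : ∀ a, (φ a).length = (ψ a).length)
    (x : List A) : (Apply φ x).length = (Apply ψ x).length := by
  induction x with
  | nil => rfl
  | cons a x ih => simp [apply_cons, ih, h a]

lemma le_length_apply (φ : A → List A) (h : ∀ a, φ a ≠ []) (x : List A) :
    x.length ≤ (Apply φ x).length := by
  induction x with
  | nil => simp [apply_nil]
  | cons a x ih =>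
      have := List.length_pos_iff.mpr (h a)
      simp only [apply_cons, List.length_append, List.length_cons]
      omega

/-! ### powers of a morphism -/

def pow (φ : A → List A) : ℕ → A → List A
  | 0, a => [a]
  | (t+1), a => Apply φ (pow φ t a)

lemma apply_pow (φ : A → List A) (t : ℕ) (x : List A) :
    Apply (pow φ t) x = (Apply φ)^[t] x := by
  induction t generalizing x with
  | zero => simp [Apply, pow]
  | succ t ih =>
      rw [Function.iterate_succ_apply', ← ih]
      have : Apply (pow φ (t+1)) x = Apply (fun a => Apply φ (pow φ t a)) x := rfl
      rw [this, ← apply_apply]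

lemma pow_eq_iterate (φ : A → List A) (t : ℕ) (a : A) :
    pow φ t a = (Apply φ)^[t] [a] := by
  rw [← apply_pow, apply_singleton]

lemma pow_add (φ : A → List A) (s t : ℕ) (a : A) :
    pow φ (s + t) a = Apply (pow φ s) (pow φ t a) := by
  rw [apply_pow, pow_eq_iterate, pow_eq_iterate, ← Function.iterate_add_apply]

lemma pow_succ' (φ : A → List A) (t : ℕ) (a : A) :
    pow φ (t + 1) a = Apply (pow φ t) (φ a) := by
  rw [pow_eq_iterate, Function.iterate_succ_apply, apply_singleton, apply_pow]

lemma pow_ne_nil (φ : A → List A) (hφ : ∀ a, φ a ≠ []) (t : ℕ) (a : A) :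
    pow φ t a ≠ [] := by
  induction t with
  | zero => simp [pow]
  | succ t ih =>
      show Apply φ (pow φ t a) ≠ []
      obtain ⟨c, r, hcr⟩ := List.exists_cons_of_ne_nil ih
      rw [hcr, apply_cons]
      exact fun h => hφ c (List.append_eq_nil_iff.mp h).1

lemma isFixedPoint_pow (φ : A → List A) (u : ℕ → A) (h : IsFixedPoint φ u) (t : ℕ) :
    IsFixedPoint (pow φ t) u := by
  intro n
  rw [apply_pow]
  induction t with
  | zero => simp [length_factorAt]
  | succ t ih =>
      rw [Function.iterate_succ_apply', ih]
      exact h _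

/-! ### left conjugation -/

lemma leftConj_words {ψ φ : A → List A} {w : List A} (h : LeftConj ψ φ w) (x : List A) :
    Apply φ x ++ w = w ++ Apply ψ x := by
  induction x with
  | nil => simp [apply_nil]
  | cons a x ih =>
      rw [apply_cons, apply_cons, List.append_assoc, ih, ← List.append_assoc, h a,
        List.append_assoc]

lemma leftConj_pow {ψ φ : A → List A} {w : List A} (h : LeftConj ψ φ w) (t : ℕ) :
    ∃ w', LeftConj (pow ψ t) (pow φ t) w' := by
  induction t with
  | zero => exact ⟨[], fun a => by simp [pow]⟩
  | succ t ih =>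
      obtain ⟨w', hw'⟩ := ih
      refine ⟨Apply φ w' ++ w, fun a => ?_⟩
      show Apply φ (pow φ t a) ++ (Apply φ w' ++ w) = (Apply φ w' ++ w) ++ Apply ψ (pow ψ t a)
      rw [← List.append_assoc, ← apply_append, hw' a, apply_append, List.append_assoc,
        leftConj_words h, ← List.append_assoc]

lemma leftConj_length {ψ φ : A → List A} {w : List A} (h : LeftConj ψ φ w) (a : A) :
    (φ a).length = (ψ a).length := by
  have := congrArg List.length (h a)
  simp at this; omega


/-! ### the block decomposition of a fixed point under a left conjugate -/

section Decomp

variable (ψ φ' : A → List A) (w : List A) (u : ℕ → A)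

/-- starting position (relative) of the `m`-th block. -/
def S (m : ℕ) : ℕ := (Apply ψ (factorAt u 0 m)).length

lemma S_succ (m : ℕ) : S ψ u (m + 1) = S ψ u m + (ψ (u m)).length := by
  unfold S
  rw [factorAt_succ, apply_append, apply_singleton, List.length_append]

lemma le_S (hne : ∀ a, ψ a ≠ []) (m : ℕ) : m ≤ S ψ u m := by
  have := le_length_apply ψ hne (factorAt u 0 m)
  rwa [length_factorAt] at this

variable {ψ φ' w u}

lemma decomp (LC : LeftConj ψ φ' w) (FIX : IsFixedPoint φ' u) (hne : ∀ a, ψ a ≠ [])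
    (m j : ℕ) (hj : j < (ψ (u m)).length) :
    u (w.length + S ψ u m + j) = (ψ (u m))[j] := by
  have hlen : ∀ x : List A, (Apply φ' x).length = (Apply ψ x).length :=
    length_apply_of_ne _ _ (fun a => leftConj_length LC a)
  set W := w.length with hW
  set i := W + S ψ u m + j with hi
  set M := i + m + 2 with hM
  have hSM : M ≤ S ψ u M := by
    apply le_S
    exact hne
  have E : factorAt u 0 (S ψ u M) ++ w = w ++ Apply ψ (factorAt u 0 M) := by
    have := leftConj_words LC (factorAt u 0 M)
    rw [FIX M] at this
    rwa [hlen, ← S] at this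
  -- index bounds
  have hiM : i < S ψ u M := by omega
  have h1 : i < (factorAt u 0 (S ψ u M) ++ w).length := by
    simp [length_factorAt, List.length_append]; omega
  have h2 := List.getElem_of_eq E h1
  rw [List.getElem_append_left (by simpa [length_factorAt] using hiM)] at h2
  rw [getElem_factorAt] at h2
  -- right side
  have hwi : w.length ≤ i := by omega
  rw [List.getElem_append_right (by simpa using hwi)] at h2
  -- now h2 : u (0 + i) = (Apply ψ (factorAt u 0 M))[i - W]
  have hMm : M - m = (M - m - 1) + 1 := by omega
  have eqBig : Apply ψ (factorAt u 0 M) =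
      Apply ψ (factorAt u 0 m) ++ (ψ (u m) ++ Apply ψ (factorAt u (m + 1) (M - m - 1))) := by
    rw [factorAt_split u m M (by omega), apply_append, hMm, factorAt_cons, apply_cons]
    simp
  rw [List.getElem_of_eq eqBig _] at h2
  have hSm : (Apply ψ (factorAt u 0 m)).length ≤ i - w.length := by
    have : (Apply ψ (factorAt u 0 m)).length = S ψ u m := rfl
    omega
  rw [List.getElem_append_right hSm] at h2
  have hidx : i - w.length - (Apply ψ (factorAt u 0 m)).length = j := by
    have : (Apply ψ (factorAt u 0 m)).length = S ψ u m := rfl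
    omega
  rw [List.getElem_append_left (hidx ▸ hj)] at h2
  rw [Nat.zero_add] at h2
  rw [hi]
  convert h2 using 2
  omega

end Decomp


/-! ### periodicity helpers -/

section Periodic

variable {u : ℕ → A} {p N : ℕ}

lemma cong (hp : 0 < p) (hper : ∀ n ≥ N, u (n + p) = u n) :
    ∀ x y, N ≤ x → N ≤ y → x % p = y % p → u x = u y := by
  have aux : ∀ d x, N ≤ x → u (x + p * d) = u x := by
    intro d
    induction d with
    | zero => simp
    | succ d ih =>
        intro x hx
        have : x + p * (d + 1) = (x + p * d) + p := by ring
        rw [this, hper _ (by omega)]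
        exact ih x hx
  intro x y hx hy hxy
  rcases le_total x y with h | h
  · obtain ⟨d, hd⟩ := (Nat.modEq_iff_dvd' h).mp hxy
    have : y = x + p * d := by omega
    rw [this, aux d x hx]
  · obtain ⟨d, hd⟩ := (Nat.modEq_iff_dvd' h).mp hxy.symm
    have : x = y + p * d := by omega
    rw [this, aux d y hy]

lemma pext (hp : 0 < p) (hper : ∀ n ≥ N, u (n + p) = u n)
    {q q' ℓ : ℕ} (hq : N ≤ q) (hq' : N ≤ q') (hℓ : p ≤ ℓ)
    (hagree : ∀ j < ℓ, u (q + j) = u (q' + j)) : ∀ j, u (q + j) = u (q' + j) := by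
  intro j
  induction j using Nat.strong_induction_on with
  | _ j ih =>
    rcases lt_or_ge j ℓ with hj | hj
    · exact hagree j hj
    · have e1 : q + j = (q + (j - p)) + p := by omega
      have e2 : q' + j = (q' + (j - p)) + p := by omega
      rw [e1, e2, hper _ (by omega), hper _ (by omega)]
      exact ih (j - p) (by omega)

lemma exists_residue (hp : 0 < p) (s n : ℕ) : ∃ r < p, (s + r) % p = n % p := by
  refine ⟨(n + (p - s % p)) % p, Nat.mod_lt _ hp, ?_⟩
  have h2 : s % p < p := Nat.mod_lt _ hp
  have h3 : p * (s / p) + s % p = s := Nat.div_add_mod s p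
  have this1 : (s + (n + (p - s % p)) % p) % p = (s + (n + (p - s % p))) % p :=
    Nat.ModEq.add_left s (Nat.mod_modEq _ p)
  have e : s + (n + (p - s % p)) = n + p + p * (s / p) := by omega
  rw [this1, e, Nat.add_mul_mod_self_left, Nat.add_mod_right]

end Periodic


/-! ### successor uniqueness -/

lemma succ_unique {ψ φ' : A → List A} {w : List A} {u : ℕ → A} {p N : ℕ}
    (hp : 0 < p) (hper : ∀ n ≥ N, u (n + p) = u n)
    (LC : LeftConj ψ φ' w) (FIX : IsFixedPoint φ' u)
    (hlen : ∀ a, p ≤ (ψ a).length)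
    (hhead : ∀ a a' (h : 0 < (ψ a).length) (h' : 0 < (ψ a').length),
      (ψ a)[0] = (ψ a')[0] → a = a') :
    ∀ n n', N ≤ n → N ≤ n' → u n = u n' → u (n + 1) = u (n' + 1) := by
  intro n n' hn hn' huu'
  have hneψ : ∀ a, ψ a ≠ [] := fun a =>
    List.ne_nil_of_length_pos (lt_of_lt_of_le hp (hlen a))
  set ℓ := (ψ (u n)).length with hℓdef
  have hℓ' : (ψ (u n')).length = ℓ := by rw [← huu']
  set q := w.length + S ψ u n with hqdef
  set q' := w.length + S ψ u n' with hq'def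
  have hq : N ≤ q := le_trans (le_trans hn (le_S ψ u hneψ n)) (by omega)
  have hq' : N ≤ q' := le_trans (le_trans hn' (le_S ψ u hneψ n')) (by omega)
  have hagree : ∀ j < ℓ, u (q + j) = u (q' + j) := by
    intro j hj
    rw [hqdef, hq'def, decomp LC FIX hneψ n j hj, decomp LC FIX hneψ n' j (by omega)]
    exact List.getElem_of_eq (by rw [huu']) hj
  have hext := pext hp hper hq hq' (hlen (u n)) hagree ℓ
  -- q + ℓ is the start of block n+1 ; same for q'
  have e1 : q + ℓ = w.length + S ψ u (n + 1) := by rw [hqdef, S_succ]; omega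
  have e2 : q' + ℓ = w.length + S ψ u (n' + 1) := by rw [hq'def, S_succ, hℓ']; omega
  have d1 := decomp LC FIX hneψ (n + 1) 0 (lt_of_lt_of_le hp (hlen _))
  have d2 := decomp LC FIX hneψ (n' + 1) 0 (lt_of_lt_of_le hp (hlen _))
  rw [Nat.add_zero] at d1 d2
  refine hhead _ _ (lt_of_lt_of_le hp (hlen _)) (lt_of_lt_of_le hp (hlen _)) ?_
  rw [← d1, ← d2, ← e1, ← e2]
  exact hext

/-! ### growth and relocation -/

lemma two_le_length {l : List A} {x y : A} (hx : x ∈ l) (hy : y ∈ l) (hxy : x ≠ y) :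
    2 ≤ l.length := by
  match l with
  | [] => simp at hx
  | [c] => simp at hx hy; exact absurd (hx.trans hy.symm) hxy
  | c :: d :: r => simp

lemma mul_le_length_apply (g : A → List A) (n : ℕ) (h : ∀ a, n ≤ (g a).length)
    (l : List A) : n * l.length ≤ (Apply g l).length := by
  induction l with
  | nil => simp [apply_nil]
  | cons a l ih =>
      have := h a
      simp only [apply_cons, List.length_append, List.length_cons]
      calc n * (l.length + 1) = n * l.length + n := by ring
        _ ≤ (Apply g l).length + (g a).length := by omega
        _ = (g a).length + (Apply g l).length := by omega

lemma growth {φ : A → List A} {k : ℕ} (hmem : ∀ a b : A, b ∈ pow φ k a)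
    (htwo : ∃ x y : A, x ≠ y) : ∀ j a, 2 ^ j ≤ (pow φ (k * j) a).length := by
  intro j
  induction j with
  | zero => intro a; simp [pow]
  | succ j ih =>
      intro a
      obtain ⟨x, y, hxy⟩ := htwo
      have h2 : 2 ≤ (pow φ k a).length := two_le_length (hmem a x) (hmem a y) hxy
      have e : k * (j + 1) = k * j + k := by ring
      rw [e, pow_add]
      calc (2:ℕ) ^ (j + 1) = 2 ^ j * 2 := by ring
        _ ≤ 2 ^ j * (pow φ k a).length := Nat.mul_le_mul_left _ h2
        _ ≤ _ := mul_le_length_apply _ _ ih _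


lemma getElem_idx_congr {l : List A} {i j : ℕ} (h : i = j) (hi : i < l.length) :
    l[i] = l[j]'(h ▸ hi) := by subst h; rfl

lemma relocate {φ : A → List A} {u : ℕ → A} {k : ℕ}
    (hfix : IsFixedPoint φ u) (hk : 1 ≤ k)
    (hmem : ∀ a b : A, b ∈ pow φ k a) (htwo : ∃ x y : A, x ≠ y) :
    ∀ i L M, ∃ m, M ≤ m ∧ ∀ j < L, u (m + j) = u (i + j) := by
  -- φ is nonerasing
  have hφne : ∀ a, φ a ≠ [] := by
    intro a h
    have hmm := hmem a a
    have e : k = (k - 1) + 1 := by omega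
    rw [e, pow_succ', h, apply_nil] at hmm
    simp at hmm
  intro i L M
  set t := k * (i + L) with ht
  have hgrow : i + L ≤ (pow φ t (u 0)).length := by
    calc i + L ≤ 2 ^ (i + L) := le_of_lt Nat.lt_two_pow_self
      _ ≤ _ := growth hmem htwo (i + L) (u 0)
  set ℓ₀ := (pow φ t (u 0)).length with hℓ₀
  -- pow φ t (u 0) is a prefix of u
  have hprefix : pow φ t (u 0) = factorAt u 0 ℓ₀ := by
    have := isFixedPoint_pow φ u hfix t 1
    rw [factorAt_one, apply_singleton] at this
    simpa using this
  have hpget : ∀ j (h : j < ℓ₀), (pow φ t (u 0))[j]'(by omega) = u j := by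
    intro j h
    rw [List.getElem_of_eq hprefix (by omega), getElem_factorAt]
    simp
  -- decomposition of u into pow φ (t+k) blocks
  set s := t + k with hs
  have LC : LeftConj (pow φ s) (pow φ s) [] := fun a => by simp
  have FIX := isFixedPoint_pow φ u hfix s
  have hneψ : ∀ a, pow φ s a ≠ [] := pow_ne_nil φ hφne s
  obtain ⟨y₁, y₂, hy⟩ := List.append_of_mem (hmem (u M) (u 0))
  have hB : pow φ s (u M) =
      Apply (pow φ t) y₁ ++ (pow φ t (u 0) ++ Apply (pow φ t) y₂) := by
    rw [hs, pow_add, hy, apply_append, apply_cons]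
  set o := (Apply (pow φ t) y₁).length with ho
  have hBlen : ∀ j, j < ℓ₀ → o + j < (pow φ s (u M)).length := by
    intro j hj
    rw [hB]
    simp only [List.length_append]
    omega
  have hBget : ∀ j (hj : j < ℓ₀), (pow φ s (u M))[o + j]'(hBlen j hj) = u j := by
    intro j hj
    rw [List.getElem_of_eq hB (hBlen j hj),
      List.getElem_append_right (by omega),
      List.getElem_append_left (by omega : o + j - (Apply (pow φ t) y₁).length < ℓ₀)]
    exact (getElem_idx_congr (by omega : o + j - (Apply (pow φ t) y₁).length = j) _).trans
      (hpget j hj)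
  -- now apply decomp for block M
  refine ⟨S (pow φ s) u M + o + i, ?_, ?_⟩
  · have := le_S (pow φ s) u hneψ M
    omega
  · intro j hj
    have hij : i + j < ℓ₀ := by omega
    have hd := decomp LC FIX hneψ M (o + (i + j))
      (by rw [hB]; simp only [List.length_append]; omega)
    simp only [List.length_nil, Nat.zero_add] at hd
    have e : S (pow φ s) u M + o + i + j = S (pow φ s) u M + (o + (i + j)) := by omega
    rw [e, hd]
    exact (getElem_idx_congr rfl _).trans (hBget (i + j) hij)


/-! ### first letters of powers -/

lemma getElem_zero_pow {φL : A → List A} (hne : ∀ a, φL a ≠ []) (fL : A → A)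
    (hfL : ∀ a (h : 0 < (φL a).length), (φL a)[0] = fL a) :
    ∀ t a (h : 0 < (pow φL t a).length), (pow φL t a)[0] = fL^[t] a := by
  intro t
  induction t with
  | zero => intro a h; simp [pow]
  | succ t ih =>
      intro a h
      obtain ⟨c, r, hcr⟩ := List.exists_cons_of_ne_nil (pow_ne_nil φL hne t a)
      have e : pow φL (t + 1) a = φL c ++ Apply φL r := by
        show Apply φL (pow φL t a) = _
        rw [hcr, apply_cons]
      have hc : c = fL^[t] a := by
        have h0 : 0 < (pow φL t a).length := List.length_pos_iff.mpr (pow_ne_nil φL hne t a)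
        have := ih a h0
        rw [List.getElem_of_eq hcr h0] at this
        simpa using this
      rw [List.getElem_of_eq e h,
        List.getElem_append_left (List.length_pos_iff.mpr (hne c)), hfL c _,
        Function.iterate_succ_apply', hc]

/-! ### the palindromic reversal step -/

lemma palrev {u : ℕ → A} {p N : ℕ} (hp : 0 < p) (hper : ∀ n ≥ N, u (n + p) = u n)
    (hpal : Palindromic u) :
    ∀ n, N ≤ n → ∃ n₀, u n₀ = u (n + 1) ∧ u (n₀ + 1) = u n := by
  intro n hn
  obtain ⟨P, ⟨q, hocc⟩, hPlen, hrev⟩ := hpal (N + p + 1)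
  have hocc' : P = factorAt u q P.length := hocc
  have hPget : ∀ j (h : j < P.length), P[j] = u (q + j) := by
    intro j h
    rw [List.getElem_of_eq hocc' h, getElem_factorAt]
  have hsym : ∀ x y (hx : x < P.length) (hy : y < P.length), x + y + 1 = P.length →
      P[x] = P[y] := by
    intro x y hx hy hxy
    have h1 : P[x] = P.reverse[y]'(by simpa using hy) := by
      rw [List.getElem_reverse]
      exact getElem_idx_congr (by omega) _
    rw [h1]
    exact List.getElem_of_eq hrev _
  have hs2 : q ≤ max q N := le_max_left _ _
  have hs3 : N ≤ max q N := le_max_right _ _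
  have hs1 : max q N ≤ q + N := by omega
  obtain ⟨r, hrlt, hres⟩ := exists_residue hp (max q N) n
  set m'' := max q N + r with hm''
  have hum : u m'' = u n := cong hp hper _ _ (by omega) hn hres
  have hum1 : u (m'' + 1) = u (n + 1) := by
    refine cong hp hper _ _ (by omega) (by omega) ?_
    exact Nat.ModEq.add_right 1 hres
  set r₀ := m'' - q with hr₀
  have hb : r₀ + 1 < P.length := by omega
  have e₁ : P[r₀]'(by omega) = u m'' := by
    rw [hPget r₀ (by omega)]; congr 1; omega
  have e₂ : P[r₀ + 1]'hb = u (m'' + 1) := by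
    rw [hPget (r₀ + 1) hb]; congr 1; omega
  set d := P.length - 2 - r₀ with hd
  refine ⟨q + d, ?_, ?_⟩
  · have h1 : u (q + d) = P[d]'(by omega) := (hPget d (by omega)).symm
    rw [h1, hsym d (r₀ + 1) (by omega) hb (by omega), e₂, hum1]
  · have h1 : u (q + d + 1) = P[d + 1]'(by omega) := by
      rw [hPget (d + 1) (by omega)]; congr 1
    rw [h1, hsym (d + 1) r₀ (by omega) (by omega) (by omega), e₁, hum]

end ZDC19


open ZDC in
/-- Let `u` be an eventually periodic fixed point of a primitive marked
morphism `φ` over `A`. If `u` is palindromic, then `A` is a binary alphabet `{a,b}` and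
`u = (ab)^ω` or `u = (ba)^ω`. -/
theorem stmt_19 {A : Type*} [Fintype A] (φ : A → List A) (u : ℕ → A)
    (hprim : Primitive φ) (hmarked : Marked φ) (hfix : IsFixedPoint φ u)
    (hep : EventuallyPeriodic u) (hpal : Palindromic u) :
    ∃ a b : A, a ≠ b ∧ (∀ c : A, c = a ∨ c = b) ∧
      ((∀ n, u n = if n % 2 = 0 then a else b) ∨
       (∀ n, u n = if n % 2 = 0 then b else a)) := by

  classical
  obtain ⟨k, hk1, hkmem⟩ := hprim
  have hmem : ∀ a b : A, b ∈ ZDC19.pow φ k a := by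
    intro a b; rw [ZDC19.pow_eq_iterate]; exact hkmem a b
  obtain ⟨hncyc, ⟨φL, ⟨⟨w0, hconj⟩, hnc⟩, hinjFst⟩, hR⟩ := hmarked
  push_neg at hnc
  obtain ⟨x0, y0, hxy0⟩ := hnc
  have htwo : ∃ x y : A, x ≠ y := ⟨x0, y0, fun h => hxy0 (by rw [h])⟩
  obtain ⟨p, hp, N, hper⟩ := hep
  have hφne : ∀ a, φ a ≠ [] := by
    intro a h
    have hmm := hmem a a
    have e : k = (k - 1) + 1 := by omega
    rw [e, ZDC19.pow_succ', h, ZDC19.apply_nil] at hmm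
    simp at hmm
  have hφLne : ∀ a, φL a ≠ [] := by
    intro a h
    have hl := ZDC19.leftConj_length hconj a
    rw [h] at hl
    simp at hl
    exact hφne a hl
  set fL : A → A := fun a => (φL a).head (hφLne a) with hfLdef
  have hfL0 : ∀ a (h : 0 < (φL a).length), (φL a)[0] = fL a := by
    intro a h
    exact List.getElem_zero h
  have hfLinj : Function.Injective fL := by
    intro a b hab
    apply hinjFst
    show (φL a).head? = (φL b).head?
    rw [List.head?_eq_head (hφLne a), List.head?_eq_head (hφLne b)]
    exact congrArg some hab
  set t := k * p with ht
  obtain ⟨wt, LCt⟩ := ZDC19.leftConj_pow hconj t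
  have FIXt := ZDC19.isFixedPoint_pow φ u hfix t
  have hlenψ : ∀ a, p ≤ (ZDC19.pow φL t a).length := by
    intro a
    have h1 : (ZDC19.pow φ t a).length = (ZDC19.pow φL t a).length :=
      ZDC19.leftConj_length LCt a
    have h2 : 2 ^ p ≤ (ZDC19.pow φ t a).length := ZDC19.growth hmem htwo p a
    have h3 := Nat.lt_two_pow_self (n := p)
    omega
  have hhead : ∀ a a' (h : 0 < (ZDC19.pow φL t a).length)
      (h' : 0 < (ZDC19.pow φL t a').length),
      (ZDC19.pow φL t a)[0] = (ZDC19.pow φL t a')[0] → a = a' := by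
    intro a a' h h' he
    rw [ZDC19.getElem_zero_pow hφLne fL hfL0 t a h,
      ZDC19.getElem_zero_pow hφLne fL hfL0 t a' h'] at he
    exact Function.Injective.iterate hfLinj t he
  have SU := ZDC19.succ_unique hp hper LCt FIXt hlenψ hhead
  have REL := ZDC19.relocate hfix hk1 hmem htwo
  have per2 : ∀ n, N ≤ n → u (n + 2) = u n := by
    intro n hn
    obtain ⟨n₀, h1, h2⟩ := ZDC19.palrev hp hper hpal n hn
    obtain ⟨m, hm, hagree⟩ := REL n₀ 2 N
    have hm0 : u m = u n₀ := by simpa using hagree 0 (by omega)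
    have hm1 : u (m + 1) = u (n₀ + 1) := hagree 1 (by omega)
    have hs := SU (n + 1) m (by omega) hm (by rw [hm0, h1])
    rw [hs, hm1, h2]
  have perall : ∀ n, u (n + 2) = u n := by
    intro n
    obtain ⟨m, hm, hagree⟩ := REL n 3 N
    have h0 : u m = u n := by simpa using hagree 0 (by omega)
    have h2 : u (m + 2) = u (n + 2) := hagree 2 (by omega)
    rw [← h2, per2 m hm, h0]
  have mod2 : ∀ n, u n = u (n % 2) := by
    intro n
    induction n using Nat.strong_induction_on with
    | _ n ih =>
      rcases lt_or_ge n 2 with h | h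
      · rw [Nat.mod_eq_of_lt h]
      · have e : n = (n - 2) + 2 := by omega
        rw [e, perall (n - 2), ih (n - 2) (by omega)]
        congr 1
        omega
  have occ : ∀ c : A, ∃ i, u i = c := by
    intro c
    have hc := hmem (u 0) c
    have hprefix : ZDC19.pow φ k (u 0) = factorAt u 0 (ZDC19.pow φ k (u 0)).length := by
      have hfp := ZDC19.isFixedPoint_pow φ u hfix k 1
      rw [ZDC19.factorAt_one, ZDC19.apply_singleton] at hfp
      simpa using hfp
    obtain ⟨i, hi, hgi⟩ := List.getElem_of_mem hc
    refine ⟨i, ?_⟩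
    rw [← hgi, List.getElem_of_eq hprefix hi, ZDC19.getElem_factorAt]
    simp
  refine ⟨u 0, u 1, ?_, ?_, Or.inl ?_⟩
  · intro h01
    obtain ⟨x, y, hxy⟩ := htwo
    obtain ⟨ix, hx⟩ := occ x
    obtain ⟨iy, hy⟩ := occ y
    apply hxy
    rw [← hx, ← hy, mod2 ix, mod2 iy]
    rcases Nat.mod_two_eq_zero_or_one ix with h | h <;>
      rcases Nat.mod_two_eq_zero_or_one iy with h' | h' <;>
      rw [h, h'] <;> rw [h01]
  · intro c
    obtain ⟨i, hi⟩ := occ c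
    rw [← hi, mod2 i]
    rcases Nat.mod_two_eq_zero_or_one i with h | h
    · left; rw [h]
    · right; rw [h]
  · intro n
    rw [mod2 n]
    rcases Nat.mod_two_eq_zero_or_one n with h | h <;> rw [h] <;> simp [h]
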